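/- Consider PG-ADMM applied to the edge-based consensus formulation: minimize Σ_{i∈N} Φ_i(x_i) subject to x_i − y_{ij} = 0 (multiplier α_{ij}) and x_j − y_{ij} = 0 (multiplier β_{ij}) for each (i,j) ∈ E, with penalties γ_i > 0 and updates: x-proximal-gradient steps; y_{ij}^{k+1} = argmin_{y_{ij}} { −⟨α_{ij}^k + β_{ij}^k, y_{ij}⟩ + (γ_i/2)‖x_i^{k+1} − y_{ij}‖² + (γ_j/2)‖x_j^{k+1} − y_{ij}‖² }; α_{ij}^{k+1} = α_{ij}^k + γ_i(x_i^{k+1} − y_{ij}^{k+1}); β_{ij}^{k+1} = β_{ij}^k + γ_j(x_j^{k+1} − y_{ij}^{k+1}). Suppose the initialization is α_{ij}⁰ = β_{ij}⁰ = 0 and y_{ij}⁰ = (γ_i x_i⁰ + γ_j x_j⁰)/(γ_i + γ_j) for all (i,j) ∈ E. Then for every (i,j) ∈ E: (i) y_{ij}^{k+1} = (α_{ij}^k + β_{ij}^k + γ_i x_i^{k+1} + γ_j x_j^{k+1})/(γ_i + γ_j) for all k ≥ 0; (ii) α_{ij}^k + β_{ij}^k = 0 for all k ≥ 1; (iii)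 y_{ij}^k = (γ_i x_i^k + γ_j x_j^k)/(γ_i + γ_j) for all k ≥ 0; (iv) α_{ij}^k = (γ_iγ_j/(γ_i+γ_j)) Σ_{ℓ=1}^k (x_i^ℓ − x_j^ℓ) and β_{ij}^k = −α_{ij}^k for all k ≥ 1; and consequently (v) the x-gradient of the augmented Lagrangian satisfies ∇_{x_i}φ_γ(x^k, y^k, α^k, β^k) = ∇f_i(x_i^k) + Σ_{j∈N_i} (γ_iγ_j/(γ_i+γ_j)) [ (x_i^k − x_j^k) + Σ_{ℓ=1}^k (x_i^ℓ − x_j^ℓ) ] for all k ≥ 0. -/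
import Mathlib


open Finset
open scoped RealInnerProductSpace

lemma quad_min' {E : Type*} [NormedAddCommGroup E] [InnerProductSpace ℝ E]
    (g1 g2 : ℝ) (h1 : 0 < g1) (h2 : 0 < g2) (c a b yy : E)
    (hmin : ∀ z : E, -⟪c, yy⟫ + g1/2*‖a - yy‖^2 + g2/2*‖b - yy‖^2
      ≤ -⟪c, z⟫ + g1/2*‖a - z‖^2 + g2/2*‖b - z‖^2) :
    yy = (g1+g2)⁻¹ • (c + g1 • a + g2 • b) := by
  set m := (g1+g2)⁻¹ • (c + g1 • a + g2 • b) with hm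
  have hs : (0:ℝ) < g1 + g2 := add_pos h1 h2
  have hv : c + g1 • a + g2 • b = (g1+g2) • m := (smul_inv_smul₀ hs.ne' _).symm
  have hA : ⟪c, yy⟫ + g1 * ⟪a, yy⟫ + g2 * ⟪b, yy⟫ = (g1+g2) * ⟪m, yy⟫ := by
    have := congrArg (fun v => ⟪v, yy⟫) hv
    simpa [inner_add_left, real_inner_smul_left] using this
  have hB : ⟪c, m⟫ + g1 * ⟪a, m⟫ + g2 * ⟪b, m⟫ = (g1+g2) * (‖m‖^2) := by
    have := congrArg (fun v => ⟪v, m⟫) hv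
    simpa [inner_add_left, real_inner_smul_left, real_inner_self_eq_norm_sq] using this
  have hnorm : ∀ u v : E, ‖u - v‖^2 = ‖u‖^2 - 2*⟪u,v⟫ + ‖v‖^2 := fun u v => by
    rw [@norm_sub_sq_real]
  have hyym : ‖yy - m‖^2 = ‖yy‖^2 - 2*⟪yy,m⟫ + ‖m‖^2 := hnorm yy m
  have hcomm : ⟪yy,m⟫ = ⟪m,yy⟫ := real_inner_comm _ _
  have hkey := hmin m
  rw [hnorm a yy, hnorm b yy, hnorm a m, hnorm b m] at hkey
  have hle : (g1+g2)/2 * ‖yy - m‖^2 ≤ 0 := by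
    rw [hyym]; nlinarith [hA, hB, hkey, hcomm]
  have hq : ‖yy - m‖^2 = 0 := by
    have := sq_nonneg ‖yy - m‖
    nlinarith
  have := norm_eq_zero.mp (pow_eq_zero_iff (by norm_num : 2 ≠ 0) |>.mp hq)
  rw [sub_eq_zero] at this
  exact this


/-- derivation of DPGA, Section `sec:dpga2`: closed forms for the
`y`-, `α`-, `β`- iterates of PG-ADMM on the edge-based consensus formulation, and the
resulting simplification of the partial gradient of the augmented Lagrangian.  Edges
are pairs `(i,j)` with `i < j` adjacent in `G`; `∇_{x_i}φ_γ` is given by the formula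
from the context. -/
theorem dpga_edge_based_identities
    {n N : ℕ} (G : SimpleGraph (Fin N)) [DecidableRel G.Adj]
    (hconn : G.Connected)
    (γ : Fin N → ℝ) (hγ : ∀ i, 0 < γ i)
    (f : Fin N → EuclideanSpace ℝ (Fin n) → ℝ)
    (f' : Fin N → EuclideanSpace ℝ (Fin n) → EuclideanSpace ℝ (Fin n))
    (hfgrad : ∀ i z, HasGradientAt (f i) (f' i z) z)
    -- primal node iterates (produced by the proximal-gradient x-steps)
    (x : ℕ → Fin N → EuclideanSpace ℝ (Fin n))
    -- edge variables and multipliers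
    (y α β : ℕ → Fin N → Fin N → EuclideanSpace ℝ (Fin n))
    -- initialization
    (hα0 : ∀ i j, G.Adj i j → i < j → α 0 i j = 0)
    (hβ0 : ∀ i j, G.Adj i j → i < j → β 0 i j = 0)
    (hy0 : ∀ i j, G.Adj i j → i < j →
      y 0 i j = (γ i + γ j)⁻¹ • (γ i • x 0 i + γ j • x 0 j))
    -- y-update: y_{ij}^{k+1} minimizes the partial augmented Lagrangian
    (hyup : ∀ k i j, G.Adj i j → i < j →
      ∀ z : EuclideanSpace ℝ (Fin n),
        -⟪α k i j + β k i j, y (k+1) i j⟫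
          + γ i / 2 * ‖x (k+1) i - y (k+1) i j‖ ^ 2
          + γ j / 2 * ‖x (k+1) j - y (k+1) i j‖ ^ 2
        ≤ -⟪α k i j + β k i j, z⟫
          + γ i / 2 * ‖x (k+1) i - z‖ ^ 2
          + γ j / 2 * ‖x (k+1) j - z‖ ^ 2)
    -- dual updates
    (hαup : ∀ k i j, G.Adj i j → i < j →
      α (k+1) i j = α k i j + γ i • (x (k+1) i - y (k+1) i j))
    (hβup : ∀ k i j, G.Adj i j → i < j →
      β (k+1) i j = β k i j + γ j • (x (k+1) j - y (k+1) i j)) :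
    -- (i) closed form of the y-update
    (∀ k i j, G.Adj i j → i < j →
      y (k+1) i j = (γ i + γ j)⁻¹
        • (α k i j + β k i j + γ i • x (k+1) i + γ j • x (k+1) j))
    -- (ii) α_{ij}^k + β_{ij}^k = 0 for k ≥ 1
    ∧ (∀ k : ℕ, 1 ≤ k → ∀ i j, G.Adj i j → i < j → α k i j + β k i j = 0)
    -- (iii) y_{ij}^k is the γ-weighted average of x_i^k and x_j^k
    ∧ (∀ k i j, G.Adj i j → i < j →
      y k i j = (γ i + γ j)⁻¹ • (γ i • x k i + γ j • x k j))
    -- (iv) closed forms of the multipliers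
    ∧ (∀ k : ℕ, 1 ≤ k → ∀ i j, G.Adj i j → i < j →
      α k i j = (γ i * γ j / (γ i + γ j)) • ∑ l ∈ Finset.Icc 1 k, (x l i - x l j)
      ∧ β k i j = -α k i j)
    -- (v) the partial gradient of the augmented Lagrangian simplifies
    ∧ (∀ k i,
      f' i (x k i)
        + ∑ j ∈ (G.neighborFinset i).filter (fun j => i < j),
            (α k i j + γ i • (x k i - y k i j))
        + ∑ j ∈ (G.neighborFinset i).filter (fun j => j < i),
            (β k j i + γ i • (x k i - y k j i))
      = f' i (x k i)
        + ∑ j ∈ G.neighborFinset i, (γ i * γ j / (γ i + γ j))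
            • ((x k i - x k j) + ∑ l ∈ Finset.Icc 1 k, (x l i - x l j))) := by
  have hs : ∀ i j : Fin N, (0:ℝ) < γ i + γ j := fun i j => add_pos (hγ i) (hγ j)
  -- (i)
  have part1 : ∀ k i j, G.Adj i j → i < j →
      y (k+1) i j = (γ i + γ j)⁻¹
        • (α k i j + β k i j + γ i • x (k+1) i + γ j • x (k+1) j) := by
    intro k i j hadj hij
    exact quad_min' (γ i) (γ j) (hγ i) (hγ j) _ _ _ _ (hyup k i j hadj hij)
  -- α + β = 0 for all k (k = 0 by init)
  have sumzero : ∀ k i j, G.Adj i j → i < j → α k i j + β k i j = 0 := by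
    intro k
    induction k with
    | zero => intro i j hadj hij; rw [hα0 i j hadj hij, hβ0 i j hadj hij, add_zero]
    | succ k IH =>
      intro i j hadj hij
      have hc := IH i j hadj hij
      have hne : γ i + γ j ≠ 0 := (hs i j).ne'
      rw [hαup k i j hadj hij, hβup k i j hadj hij, part1 k i j hadj hij, hc,
        ← neg_eq_of_add_eq_zero_right hc]
      match_scalars <;> field_simp <;> (first | ring1 | tauto)
  -- (iii) for all k
  have part3 : ∀ k i j, G.Adj i j → i < j →
      y k i j = (γ i + γ j)⁻¹ • (γ i • x k i + γ j • x k j) := by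
    intro k i j hadj hij
    cases k with
    | zero => exact hy0 i j hadj hij
    | succ k =>
      rw [part1 k i j hadj hij, sumzero k i j hadj hij, zero_add]
  -- closed form for α, all k
  have hαall : ∀ k i j, G.Adj i j → i < j →
      α k i j = (γ i * γ j / (γ i + γ j)) • ∑ l ∈ Finset.Icc 1 k, (x l i - x l j) := by
    intro k
    induction k with
    | zero =>
      intro i j hadj hij
      simp [hα0 i j hadj hij]
    | succ k IH =>
      intro i j hadj hij
      have hne : γ i + γ j ≠ 0 := (hs i j).ne'
      rw [hαup k i j hadj hij, part3 (k+1) i j hadj hij, IH i j hadj hij,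
        Finset.sum_Icc_succ_top (by omega : 1 ≤ k+1)]
      match_scalars <;> field_simp <;> (first | ring1 | tauto)
  have hβall : ∀ k i j, G.Adj i j → i < j → β k i j = -α k i j := by
    intro k i j hadj hij
    cases k with
    | zero => rw [hβ0 i j hadj hij, hα0 i j hadj hij, neg_zero]
    | succ k =>
      exact (neg_eq_of_add_eq_zero_right (sumzero (k+1) i j hadj hij)).symm
  refine ⟨part1, fun k _ i j hadj hij => sumzero k i j hadj hij, part3,
    fun k _ i j hadj hij => ⟨hαall k i j hadj hij, hβall k i j hadj hij⟩, ?_⟩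
  -- (v)
  intro k i
  rw [add_assoc]
  congr 1
  have hsplit := Finset.sum_filter_add_sum_filter_not (G.neighborFinset i)
    (fun j => i < j) (fun j => (γ i * γ j / (γ i + γ j))
      • ((x k i - x k j) + ∑ l ∈ Finset.Icc 1 k, (x l i - x l j)))
  have hfeq : (G.neighborFinset i).filter (fun j => ¬ i < j)
      = (G.neighborFinset i).filter (fun j => j < i) := by
    apply Finset.filter_congr
    intro j hj
    rw [SimpleGraph.mem_neighborFinset] at hj
    have hne : j ≠ i := (G.ne_of_adj hj).symm
    simp only [not_lt]
    exact ⟨fun h => lt_of_le_of_ne h hne, fun h => h.le⟩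
  rw [← hsplit, hfeq]
  congr 1
  · apply Finset.sum_congr rfl
    intro j hj
    rw [Finset.mem_filter, SimpleGraph.mem_neighborFinset] at hj
    obtain ⟨hadj, hij⟩ := hj
    have hne : γ i + γ j ≠ 0 := (hs i j).ne'
    rw [hαall k i j hadj hij, part3 k i j hadj hij]
    match_scalars <;> field_simp <;> (first | ring1 | tauto)
  · apply Finset.sum_congr rfl
    intro j hj
    rw [Finset.mem_filter, SimpleGraph.mem_neighborFinset] at hj
    obtain ⟨hadj, hji⟩ := hj
    have hadj' : G.Adj j i := hadj.symm
    have hne : γ i + γ j ≠ 0 := (hs i j).ne'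
    have hne' : γ j + γ i ≠ 0 := (hs j i).ne'
    have hS : ∑ l ∈ Finset.Icc 1 k, (x l j - x l i)
        = -∑ l ∈ Finset.Icc 1 k, (x l i - x l j) := by
      rw [← Finset.sum_neg_distrib]
      exact Finset.sum_congr rfl fun l _ => (neg_sub _ _).symm
    rw [hβall k j i hadj' hji, hαall k j i hadj' hji, part3 k j i hadj' hji, hS]
    match_scalars <;> field_simp <;>
      (first | ring1 | exact Or.inl (add_comm _ _))
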